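/- For all integers n and k with 1 ≤ k ≤ n, the Stirling numbers of the second kind with level 2 admit the explicit expression S₂(n,k;2) = (2/(2k)!) · Σ_{j=1}^{k} (−1)^{k−j} · C(2k, k−j) · j^{2n}, where C(·,·) denotes a binomial coefficient (an identity in ℚ). -/

import Mathlib

/-- Stirling numbers of the second kind with level `s`. -/
def stirling2Lev (s : ℕ) : ℕ → ℕ → ℕ
  | 0, 0 => 1
  | 0, _ + 1 => 0
  | _ + 1, 0 => 0
  | n + 1, k + 1 => stirling2Lev s n k + (k + 1) ^ s * stirling2Lev s n (k + 1)

/-- Key binomial identity in `ℚ`. -/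
lemma keyQ0 (M i : ℕ) :
    (((M + i + 2).choose (i + 1) : ℚ)) * ((i + 1) * (M + 1))
      = (M + i + 2) * (M + i + 1) * ((M + i).choose i : ℚ) := by
  have e1 : ((M + i + 2 : ℕ) : ℚ) * ((M + i + 1).choose i : ℚ)
      = ((M + i + 2).choose (i + 1) : ℚ) * ((i : ℚ) + 1) := by
    have := Nat.add_one_mul_choose_eq (M + i + 1) i
    exact_mod_cast congrArg (Nat.cast : ℕ → ℚ) this
  have e2 : ((M + i + 1).choose (i + 1) : ℚ) * ((i : ℚ) + 1)
      = ((M + i + 1).choose i : ℚ) * ((M : ℚ) + 1) := by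
    have h := Nat.choose_succ_right_eq (M + i + 1) i
    have hs : M + i + 1 - i = M + 1 := by omega
    rw [hs] at h
    exact_mod_cast congrArg (Nat.cast : ℕ → ℚ) h
  have e3 : ((M + i + 1 : ℕ) : ℚ) * ((M + i).choose i : ℚ)
      = ((M + i + 1).choose (i + 1) : ℚ) * ((i : ℚ) + 1) := by
    have := Nat.add_one_mul_choose_eq (M + i) i
    exact_mod_cast congrArg (Nat.cast : ℕ → ℚ) this
  push_cast at e1 e2 e3 ⊢
  linear_combination (-(M : ℚ) - 1) * e1 - ((M : ℚ) + i + 2) * e2 - ((M : ℚ) + i + 2) * e3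

/-- Step identity: multiplying by `j² - k²` lowers `k` by one. -/
lemma stepQ (K : ℕ) (g : ℕ → ℚ) :
    ∑ j ∈ Finset.Icc 1 (K + 2),
        (-1 : ℚ) ^ (K + 2 - j) * ((2 * (K + 2)).choose (K + 2 - j) : ℚ) *
          (((j : ℚ) ^ 2 - ((K : ℚ) + 2) ^ 2) * g j)
      = (2 * (K : ℚ) + 4) * (2 * (K : ℚ) + 3) *
          ∑ j ∈ Finset.Icc 1 (K + 1),
            (-1 : ℚ) ^ (K + 1 - j) * ((2 * (K + 1)).choose (K + 1 - j) : ℚ) * g j := by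
  have this : ∀ j ∈ Finset.Icc 1 (K + 1),
      (-1 : ℚ) ^ (K + 2 - j) * ((2 * (K + 2)).choose (K + 2 - j) : ℚ) *
          (((j : ℚ) ^ 2 - ((K : ℚ) + 2) ^ 2) * g j)
        = (2 * (K : ℚ) + 4) * (2 * (K : ℚ) + 3) *
            ((-1 : ℚ) ^ (K + 1 - j) * ((2 * (K + 1)).choose (K + 1 - j) : ℚ) * g j) := by
    intro j hj
    simp only [Finset.mem_Icc] at hj
    obtain ⟨j', rfl⟩ : ∃ j', j = j' + 1 := ⟨j - 1, by omega⟩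
    obtain ⟨i, rfl⟩ : ∃ i, K = j' + i := ⟨K - j', by omega⟩
    have h1 : j' + i + 2 - (j' + 1) = i + 1 := by omega
    have h2 : j' + i + 1 - (j' + 1) = i := by omega
    have h3 : 2 * (j' + i + 2) = (2 * j' + i + 2) + i + 2 := by ring
    have h4 : 2 * (j' + i + 1) = (2 * j' + i + 2) + i := by ring
    rw [h1, h2, h3, h4]
    have hk := keyQ0 (2 * j' + i + 2) i
    push_cast at hk ⊢
    linear_combination ((-1 : ℚ) ^ i * g (j' + 1)) * hk
  rw [Finset.sum_Icc_succ_top (by omega : 1 ≤ K + 1 + 1), Finset.mul_sum,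
    Finset.sum_congr rfl this]
  have hz : (((K + 1 + 1 : ℕ) : ℚ)) ^ 2 - ((K : ℚ) + 2) ^ 2 = 0 := by push_cast; ring
  rw [hz]
  simp

/-- Partial alternating sums of binomial coefficients. -/
lemma altPartial (N : ℕ) : ∀ m : ℕ,
    ∑ i ∈ Finset.range (m + 1), (-1 : ℚ) ^ i * ((N + 1).choose i : ℚ)
      = (-1 : ℚ) ^ m * (N.choose m : ℚ)
  | 0 => by simp
  | m + 1 => by
    rw [Finset.sum_range_succ, altPartial N m]
    have h : ((N + 1).choose (m + 1) : ℚ) = (N.choose m : ℚ) + (N.choose (m + 1) : ℚ) := by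
      exact_mod_cast congrArg (Nat.cast : ℕ → ℚ) (Nat.choose_succ_succ N m)
    linear_combination ((-1 : ℚ) ^ (m + 1)) * h

/-- Closed form of `A(m+1) = Σ_{j=1}^{m+1} (-1)^{m+1-j} C(2(m+1), m+1-j)`. -/
lemma Asum (m : ℕ) :
    ∑ j ∈ Finset.Icc 1 (m + 1),
        (-1 : ℚ) ^ (m + 1 - j) * ((2 * (m + 1)).choose (m + 1 - j) : ℚ)
      = (-1 : ℚ) ^ m * ((2 * m + 1).choose m : ℚ) := by
  have hre : ∑ j ∈ Finset.Icc 1 (m + 1),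
      (-1 : ℚ) ^ (m + 1 - j) * ((2 * (m + 1)).choose (m + 1 - j) : ℚ)
      = ∑ i ∈ Finset.range (m + 1), (-1 : ℚ) ^ i * ((2 * (m + 1)).choose i : ℚ) := by
    refine Finset.sum_nbij' (fun j => m + 1 - j) (fun i => m + 1 - i) ?_ ?_ ?_ ?_ ?_
    · intro a ha; simp only [Finset.mem_Icc] at ha; simp only [Finset.mem_range]; omega
    · intro a ha; simp only [Finset.mem_range] at ha; simp only [Finset.mem_Icc]; omega
    · intro a ha; simp only [Finset.mem_Icc] at ha; show m + 1 - (m + 1 - a) = a; omega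
    · intro a ha; simp only [Finset.mem_range] at ha; show m + 1 - (m + 1 - a) = a; omega
    · intro a _; rfl
  rw [hre]
  have h : 2 * (m + 1) = (2 * m + 1) + 1 := by ring
  rw [h]
  exact altPartial (2 * m + 1) m

/-- Helper binomial identity. -/
lemma qhelper (m : ℕ) :
    (2 * (m : ℚ) + 4) * (2 * (m : ℚ) + 3) * ((2 * m + 1).choose m : ℚ)
      = ((m : ℚ) + 2) ^ 2 * ((2 * m + 3).choose (m + 1) : ℚ) := by
  have e1 : ((2 * m + 2 : ℕ) : ℚ) * ((2 * m + 1).choose m : ℚ)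
      = ((2 * m + 2).choose (m + 1) : ℚ) * ((m : ℚ) + 1) := by
    have := Nat.add_one_mul_choose_eq (2 * m + 1) m
    exact_mod_cast congrArg (Nat.cast : ℕ → ℚ) this
  have e2 : ((2 * m + 3 : ℕ) : ℚ) * ((2 * m + 2).choose (m + 1) : ℚ)
      = ((2 * m + 3).choose (m + 1) : ℚ) * ((m : ℚ) + 2) := by
    have h := Nat.add_one_mul_choose_eq (2 * m + 2) (m + 1)
    have hsym : (2 * m + 3).choose (m + 2) = (2 * m + 3).choose (m + 1) := by
      have := Nat.choose_symm (show m + 1 ≤ 2 * m + 3 by omega)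
      have hd : 2 * m + 3 - (m + 1) = m + 2 := by omega
      rw [hd] at this
      exact this
    rw [show 2 * m + 2 + 1 = 2 * m + 3 from rfl, show m + 1 + 1 = m + 2 from rfl, hsym] at h
    exact_mod_cast congrArg (Nat.cast : ℕ → ℚ) h
  push_cast at e1 e2
  have hm1 : (m : ℚ) + 1 ≠ 0 := by positivity
  refine mul_left_cancel₀ hm1 ?_
  linear_combination (((m : ℚ) + 2) * (2 * m + 3)) * e1 + (((m : ℚ) + 1) * ((m : ℚ) + 2)) * e2

/-- The base-case alternating sum vanishes for `k ≥ 2`. -/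
lemma Bsum (m : ℕ) :
    ∑ j ∈ Finset.Icc 1 (m + 2),
        (-1 : ℚ) ^ (m + 2 - j) * ((2 * (m + 2)).choose (m + 2 - j) : ℚ) * (j : ℚ) ^ 2
      = 0 := by
  have hs := stepQ m (fun _ => (1 : ℚ))
  have hsplit : ∑ j ∈ Finset.Icc 1 (m + 2),
      (-1 : ℚ) ^ (m + 2 - j) * ((2 * (m + 2)).choose (m + 2 - j) : ℚ) * (j : ℚ) ^ 2
      = (∑ j ∈ Finset.Icc 1 (m + 2),
          (-1 : ℚ) ^ (m + 2 - j) * ((2 * (m + 2)).choose (m + 2 - j) : ℚ) *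
            (((j : ℚ) ^ 2 - ((m : ℚ) + 2) ^ 2) * (fun _ => (1 : ℚ)) j))
        + ((m : ℚ) + 2) ^ 2 * ∑ j ∈ Finset.Icc 1 (m + 2),
            (-1 : ℚ) ^ (m + 2 - j) * ((2 * (m + 2)).choose (m + 2 - j) : ℚ) := by
    rw [Finset.mul_sum, ← Finset.sum_add_distrib]
    refine Finset.sum_congr rfl fun j _ => ?_
    ring
  rw [hsplit, hs]
  have hA1 : ∑ j ∈ Finset.Icc 1 (m + 2),
      (-1 : ℚ) ^ (m + 2 - j) * ((2 * (m + 2)).choose (m + 2 - j) : ℚ)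
      = (-1 : ℚ) ^ (m + 1) * ((2 * (m + 1) + 1).choose (m + 1) : ℚ) := by
    have := Asum (m + 1)
    rw [show m + 1 + 1 = m + 2 from rfl] at this
    exact this
  have hA0 : ∑ j ∈ Finset.Icc 1 (m + 1),
      (-1 : ℚ) ^ (m + 1 - j) * ((2 * (m + 1)).choose (m + 1 - j) : ℚ) * (fun _ => (1 : ℚ)) j
      = (-1 : ℚ) ^ m * ((2 * m + 1).choose m : ℚ) := by
    rw [← Asum m]
    exact Finset.sum_congr rfl fun j _ => by ring
  rw [hA1, hA0]
  have hq := qhelper m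
  have h1 : 2 * (m + 1) + 1 = 2 * m + 3 := by ring
  rw [h1]
  linear_combination ((-1 : ℚ) ^ m) * hq

lemma stirling_zero (n : ℕ) (hn : 1 ≤ n) : stirling2Lev 2 n 0 = 0 := by
  obtain ⟨m, rfl⟩ : ∃ m, n = m + 1 := ⟨n - 1, by omega⟩
  simp [stirling2Lev]

/-- Main lemma. -/
lemma mainLemma (n : ℕ) (hn : 1 ≤ n) : ∀ k : ℕ, 1 ≤ k →
    (stirling2Lev 2 n k : ℚ) =
      (2 / (Nat.factorial (2 * k) : ℚ)) *
        ∑ j ∈ Finset.Icc 1 k,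
          (-1 : ℚ) ^ (k - j) * (Nat.choose (2 * k) (k - j) : ℚ) * (j : ℚ) ^ (2 * n) := by
  induction n, hn using Nat.le_induction with
  | base =>
    intro k hk
    match k, hk with
    | 1, _ => norm_num [stirling2Lev, Finset.Icc_self]
    | (m + 2), _ =>
      have hL : stirling2Lev 2 1 (m + 2) = 0 := by simp [stirling2Lev]
      rw [hL]
      have : ∑ j ∈ Finset.Icc 1 (m + 2),
          (-1 : ℚ) ^ (m + 2 - j) * ((2 * (m + 2)).choose (m + 2 - j) : ℚ) * (j : ℚ) ^ (2 * 1)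
          = 0 := by
        rw [← Bsum m]
      rw [this]; simp
  | succ n hn ih =>
    intro k hk
    match k, hk with
    | 1, _ =>
      have hL : (stirling2Lev 2 (n + 1) 1 : ℚ) = (stirling2Lev 2 n 1 : ℚ) := by
        have h0 := stirling_zero n hn
        simp [stirling2Lev, h0]
      rw [hL, ih 1 le_rfl]
      norm_num [Finset.Icc_self]
    | (m + 2), _ =>
      have hL : (stirling2Lev 2 (n + 1) (m + 2) : ℚ)
          = (stirling2Lev 2 n (m + 1) : ℚ)
            + ((m : ℚ) + 2) ^ 2 * (stirling2Lev 2 n (m + 2) : ℚ) := by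
        show ((stirling2Lev 2 (n + 1) (m + 1 + 1) : ℕ) : ℚ) = _
        rw [show stirling2Lev 2 (n + 1) (m + 1 + 1)
            = stirling2Lev 2 n (m + 1) + (m + 1 + 1) ^ 2 * stirling2Lev 2 n (m + 1 + 1)
            from rfl]
        push_cast
        ring
      rw [hL, ih (m + 1) (by omega), ih (m + 2) (by omega)]
      have hs := stepQ m (fun j => (j : ℚ) ^ (2 * n))
      have hsplit : ∑ j ∈ Finset.Icc 1 (m + 2),
          (-1 : ℚ) ^ (m + 2 - j) * ((2 * (m + 2)).choose (m + 2 - j) : ℚ) *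
            (j : ℚ) ^ (2 * (n + 1))
          = (∑ j ∈ Finset.Icc 1 (m + 2),
              (-1 : ℚ) ^ (m + 2 - j) * ((2 * (m + 2)).choose (m + 2 - j) : ℚ) *
                (((j : ℚ) ^ 2 - ((m : ℚ) + 2) ^ 2) * (fun j => (j : ℚ) ^ (2 * n)) j))
            + ((m : ℚ) + 2) ^ 2 * ∑ j ∈ Finset.Icc 1 (m + 2),
                (-1 : ℚ) ^ (m + 2 - j) * ((2 * (m + 2)).choose (m + 2 - j) : ℚ) *
                  (j : ℚ) ^ (2 * n) := by
        rw [Finset.mul_sum, ← Finset.sum_add_distrib]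
        refine Finset.sum_congr rfl fun j _ => ?_
        rw [show 2 * (n + 1) = 2 * n + 2 by ring, pow_add]
        ring
      rw [hsplit, hs]
      have hf : ((2 * (m + 2)).factorial : ℚ)
          = (2 * (m : ℚ) + 4) * (2 * (m : ℚ) + 3) * ((2 * (m + 1)).factorial : ℚ) := by
        have hn : (2 * (m + 2)).factorial
            = (2 * m + 4) * ((2 * m + 3) * (2 * m + 2).factorial) := by
          rw [show 2 * (m + 2) = (2 * m + 2) + 1 + 1 by ring, Nat.factorial_succ,
            Nat.factorial_succ]
        rw [hn, show 2 * (m + 1) = 2 * m + 2 by ring]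
        push_cast
        ring
      rw [hf]
      have hF : ((2 * (m + 1)).factorial : ℚ) ≠ 0 := by
        exact_mod_cast Nat.factorial_ne_zero _
      have h1 : (2 * (m : ℚ) + 4) ≠ 0 := by positivity
      have h2 : (2 * (m : ℚ) + 3) ≠ 0 := by positivity
      field_simp
  
/-- For `1 ≤ k ≤ n`, `S₂(n,k;2) = (2/(2k)!) Σ_{j=1}^k (−1)^{k−j} C(2k, k−j) j^{2n}` in `ℚ`. -/
theorem stmt_19 (n k : ℕ) (hk : 1 ≤ k) (hkn : k ≤ n) :
    (stirling2Lev 2 n k : ℚ) =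
      (2 / (Nat.factorial (2 * k) : ℚ)) *
        ∑ j ∈ Finset.Icc 1 k,
          (-1 : ℚ) ^ (k - j) * (Nat.choose (2 * k) (k - j) : ℚ) * (j : ℚ) ^ (2 * n) := by
  exact mainLemma n (le_trans hk hkn) k hk
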